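/- Let G be a finite group. If G⁻ is a subgroup of G, then every element of G has prime power order. -/
import Mathlib


/-- A subgroup is maximal cyclic if it is cyclic and not properly contained
in any cyclic subgroup. -/
def IsMaximalCyclic {G : Type*} [Group G] (C : Subgroup G) : Prop :=
  IsCyclic C ∧ ∀ D : Subgroup G, IsCyclic D → C ≤ D → C = D

/-- η(G): the number of conjugacy classes of maximal cyclic subgroups of `G`. -/
noncomputable def eta (G : Type*) [Group G] : ℕ :=
  Nat.card (Quot (fun C D : {C : Subgroup G // IsMaximalCyclic C} =>
    ∃ g : G, D.1 = C.1.map (MulAut.conj g).toMonoidHom))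

/-- The set of elements generating a non-maximal cyclic subgroup. -/
def Gminus (G : Type*) [Group G] : Set G :=
  {g : G | ¬ IsMaximalCyclic (Subgroup.zpowers g)}

/-- `C` is a maximal cyclic subgroup of `N` (all inside an ambient group). -/
def IsMaximalCyclicIn {G : Type*} [Group G] (N C : Subgroup G) : Prop :=
  C ≤ N ∧ IsCyclic C ∧ ∀ D : Subgroup G, D ≤ N → IsCyclic D → C ≤ D → C = D

lemma zpowers_isCyclic' {G : Type*} [Group G] (g : G) : IsCyclic (Subgroup.zpowers g) := by
  refine ⟨⟨⟨g, Subgroup.mem_zpowers g⟩, fun x => ?_⟩⟩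
  obtain ⟨k, hk⟩ := x.2
  exact ⟨k, Subtype.ext (by simpa using hk)⟩

-- key: if g has non-prime-power order, then g ∈ Gminus
lemma key {G : Type*} [Group G] [Finite G] {H : Subgroup G} (hH : (H : Set G) = Gminus G)
    (g : G) (hg : ¬ ∃ q n : ℕ, q.Prime ∧ orderOf g = q ^ n) : ¬ IsMaximalCyclic (Subgroup.zpowers g) := by
  set N := orderOf g with hN
  have hN0 : N ≠ 0 := (orderOf_pos g).ne'
  have hN1 : N ≠ 1 := by
    intro h1; exact hg ⟨2, 0, Nat.prime_two, by simp [h1]⟩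
  obtain ⟨p, hp, hpd⟩ := Nat.exists_prime_and_dvd hN1
  set a := p ^ N.factorization p with ha
  set b := N / a with hb
  have hab : a * b = N := Nat.ordProj_mul_ordCompl_eq_self N p
  have hcop : Nat.Coprime a b := Nat.Coprime.pow_left _ (Nat.coprime_ordCompl hp hN0)
  have ha1 : 1 < a := by
    have : 1 ≤ N.factorization p := (Nat.Prime.factorization_pos_of_dvd hp hN0 hpd)
    calc 1 < p := hp.one_lt
    _ ≤ p ^ N.factorization p := Nat.le_self_pow (by omega) p
  have hb0 : b ≠ 0 := by
    intro h0; rw [h0, mul_zero] at hab; exact hN0 hab.symm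
  have hb1 : 1 < b := by
    rcases Nat.lt_or_ge b 2 with h | h
    · interval_cases b
      · omega
      · exact absurd ⟨p, N.factorization p, hp, by omega⟩ hg
    · omega
  -- orders of powers
  have horda : orderOf (g ^ a) = b := by
    rw [orderOf_pow' g (by omega : a ≠ 0), ← hN, Nat.gcd_eq_right ⟨b, hab.symm⟩, hb]
  have hordb : orderOf (g ^ b) = a := by
    rw [orderOf_pow' g (by omega : b ≠ 0), ← hN, Nat.gcd_eq_right ⟨a, by rw [← hab]; ring⟩]
    exact Nat.div_eq_of_eq_mul_left (by omega) (by rw [← hab, mul_comm])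
  have hbN : b < N := by rw [← hab]; nlinarith
  have haN : a < N := by rw [← hab]; nlinarith
  -- non-maximality of a power with smaller order
  have nonmax : ∀ x : G, x ∈ Subgroup.zpowers g → orderOf x < N →
      ¬ IsMaximalCyclic (Subgroup.zpowers x) := by
    intro x hx hlt ⟨_, hmax⟩
    have := hmax (Subgroup.zpowers g) (zpowers_isCyclic' g)
      ((Subgroup.zpowers_le).2 hx)
    have hcard : Nat.card (Subgroup.zpowers x) = Nat.card (Subgroup.zpowers g) := by rw [this]
    rw [Nat.card_zpowers, Nat.card_zpowers] at hcard
    omega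
  have hga : g ^ a ∈ H := by
    have : g ^ a ∈ Gminus G := nonmax _ ⟨(a : ℤ), by simp⟩ (by omega)
    rwa [← hH] at this
  have hgb : g ^ b ∈ H := by
    have : g ^ b ∈ Gminus G := nonmax _ ⟨(b : ℤ), by simp⟩ (by omega)
    rwa [← hH] at this
  have hsum : g ^ (a + b) ∈ H := by rw [pow_add]; exact mul_mem hga hgb
  have hcop2 : N.Coprime (a + b) := by
    have c1 : Nat.Coprime a (a + b) := by
      simpa [Nat.coprime_add_self_left] using hcop
    have c2 : Nat.Coprime b (a + b) := by
      have : Nat.Coprime b a := hcop.symm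
      simpa [Nat.coprime_add_self_right] using this
    rw [← hab]; exact Nat.Coprime.mul c1 c2
  have hordsum : orderOf (g ^ (a + b)) = N := by
    exact hcop2.orderOf_pow
  have hzp : Subgroup.zpowers (g ^ (a + b)) = Subgroup.zpowers g := by
    have hmem : g ^ (a + b) ∈ Subgroup.zpowers g := ⟨((a + b : ℕ) : ℤ), zpow_natCast g (a + b)⟩
    apply Subgroup.eq_of_le_of_card_ge ((Subgroup.zpowers_le).2 hmem)
    rw [Nat.card_zpowers, Nat.card_zpowers, hordsum]
  have : g ^ (a + b) ∈ Gminus G := by rw [← hH]; exact hsum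
  rw [Gminus, Set.mem_setOf_eq, hzp] at this
  exact this

lemma escalate {G : Type*} [Group G] [Finite G] {H : Subgroup G} (hH : (H : Set G) = Gminus G)
    (g : G) (hg : ¬ ∃ q n : ℕ, q.Prime ∧ orderOf g = q ^ n) :
    ∃ x : G, orderOf g < orderOf x ∧ ¬ ∃ q n : ℕ, q.Prime ∧ orderOf x = q ^ n := by
  have hnm := key hH g hg
  rw [IsMaximalCyclic, not_and] at hnm
  have := hnm (zpowers_isCyclic' g)
  push_neg at this
  obtain ⟨D, hDc, hle, hne⟩ := this
  haveI : IsCyclic D := hDc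
  obtain ⟨ξ, hξ⟩ := IsCyclic.exists_generator (α := D)
  refine ⟨(ξ : G), ?_, ?_⟩
  · have hDz : D = Subgroup.zpowers (ξ : G) := by
      apply le_antisymm
      · intro d hd
        obtain ⟨k, hk⟩ := hξ ⟨d, hd⟩
        exact ⟨k, by show ((ξ : G)) ^ k = _; rw [← Subgroup.coe_zpow]; exact congrArg Subtype.val hk⟩
      · exact (Subgroup.zpowers_le).2 ξ.2
    have hlt : Subgroup.zpowers g < D := lt_of_le_of_ne hle hne
    have hcard : Nat.card (Subgroup.zpowers g) < Nat.card D := by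
      rcases lt_or_ge (Nat.card (Subgroup.zpowers g)) (Nat.card D) with h | h
      · exact h
      · exact absurd (Subgroup.eq_of_le_of_card_ge hle h) hne
    rwa [hDz, Nat.card_zpowers, Nat.card_zpowers] at hcard
  · rintro ⟨q, n, hq, hx⟩
    have hmem : g ∈ Subgroup.zpowers (ξ : G) := by
      obtain ⟨k, hk⟩ := hξ ⟨g, hle (Subgroup.mem_zpowers g)⟩
      exact ⟨k, by show ((ξ : G)) ^ k = _; rw [← Subgroup.coe_zpow]; exact congrArg Subtype.val hk⟩
    have hdvd : orderOf g ∣ q ^ n := hx ▸ orderOf_dvd_of_mem_zpowers hmem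
    obtain ⟨m, _, hm⟩ := (Nat.dvd_prime_pow hq).1 hdvd
    exact hg ⟨q, m, hq, hm⟩

theorem stmt_16 {G : Type*} [Group G] [Finite G]
    (h : ∃ H : Subgroup G, (H : Set G) = Gminus G) :
    ∀ g : G, ∃ q n : ℕ, q.Prime ∧ orderOf g = q ^ n := by
  obtain ⟨H, hH⟩ := h
  have ordle : ∀ x : G, orderOf x ≤ Nat.card G := fun x =>
    Nat.card_zpowers x ▸ Subgroup.card_le_card_group _
  have main : ∀ m : ℕ, ∀ g : G, (¬ ∃ q n : ℕ, q.Prime ∧ orderOf g = q ^ n) →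
      orderOf g + m ≤ Nat.card G := by
    intro m
    induction m with
    | zero => intro g _; simpa using ordle g
    | succ m ih =>
      intro g hg
      obtain ⟨x, hlt, hx⟩ := escalate hH g hg
      have := ih x hx
      omega
  intro g
  by_contra hg
  have h1 := main (Nat.card G) g hg
  have h2 : 0 < orderOf g := orderOf_pos g
  omega
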